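/- Let 𝒪 be an infinite order ideal in P = K[x_0,…,x_n], fix a labeling of ∂𝒪 ordered increasingly by degree, and let G be a homogeneous ∂𝒪-prebasis. The following are equivalent: (i) G is a homogeneous ∂𝒪-basis (of the ideal (G)); (ii) ⟨𝒯G_d⟩ = (G)_d for every d ≥ 0; (iii) ⟨𝒯G⟩ = (G). -/

import Mathlib

open MvPolynomial

namespace Border

/-- A term of `K[x_0, …, x_n]`, identified with its exponent vector. -/
abbrev Term (n : ℕ) := Fin (n + 1) →₀ ℕ

variable {n : ℕ}

/-- The (standard) degree of a term. -/
def tdeg (m : Term n) : ℕ := ∑ i, m i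

/-- An order ideal: a nonempty set of terms closed under divisors. -/
def IsOrderIdeal (O : Set (Term n)) : Prop :=
  O.Nonempty ∧ ∀ τ ∈ O, ∀ τ' : Term n, τ' ≤ τ → τ' ∈ O

/-- The border `∂𝒪 = (x_0·𝒪 ∪ ⋯ ∪ x_n·𝒪) ∖ 𝒪`. -/
def border (O : Set (Term n)) : Set (Term n) :=
  {σ | σ ∉ O ∧ ∃ r : Fin (n + 1), ∃ τ ∈ O, σ = τ + Finsupp.single r 1}

/-- Multiplicative set of a border term `σ`, with respect to a labeling `lab` of the border:
`𝒯_σ = {η : σ' ∤ η·σ for every border term σ' with a larger label}`. -/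
def mulSet (O : Set (Term n)) (lab : Term n → ℕ) (σ : Term n) : Set (Term n) :=
  {η | ∀ σ' ∈ border O, lab σ < lab σ' → ¬ σ' ≤ η + σ}

/-- The cone `C(σ) = {η·σ : η ∈ 𝒯_σ}`. -/
def cone (O : Set (Term n)) (lab : Term n → ℕ) (σ : Term n) : Set (Term n) :=
  (fun η => η + σ) '' mulSet O lab σ

/-- A labeling of the border which is injective and ordered increasingly by degree. -/
def DegOrderedLabeling (O : Set (Term n)) (lab : Term n → ℕ) : Prop :=
  Set.InjOn lab (border O) ∧
    ∀ σ ∈ border O, ∀ σ' ∈ border O, lab σ < lab σ' → tdeg σ ≤ tdeg σ'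

/-- Iterated border closures: `∂⁰𝒪 := 𝒪`, and the `(k+1)`-st closure adds the border. -/
def borderClosure (O : Set (Term n)) : ℕ → Set (Term n)
  | 0 => O
  | k + 1 => borderClosure O k ∪ border (borderClosure O k)

/-- The index `ind_𝒪(τ)`: the least `k` with `τ ∈ ∂^k𝒪`. -/
noncomputable def ind (O : Set (Term n)) (τ : Term n) : ℕ :=
  sInf {k | τ ∈ borderClosure O k}

/-- Degree-`d` part of a set of terms. -/
def Od (O : Set (Term n)) (d : ℕ) : Set (Term n) := {τ | τ ∈ O ∧ tdeg τ = d}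

variable {K : Type*} [Field K]

/-- The index of a nonzero polynomial: the maximal index of a term of its support. -/
noncomputable def indP (O : Set (Term n)) (f : MvPolynomial (Fin (n + 1)) K) : ℕ :=
  f.support.sup (ind O)

/-- A homogeneous `∂𝒪`-prebasis: a family `g σ = σ - Σ_{τ ∈ 𝒪_{deg σ}} c_{στ} τ`. -/
def IsPrebasis (O : Set (Term n)) (g : Term n → MvPolynomial (Fin (n + 1)) K) : Prop :=
  ∀ σ ∈ border O, ∀ τ ∈ (monomial σ (1 : K) - g σ).support, τ ∈ O ∧ tdeg τ = tdeg σ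

/-- The set of border reductors `𝒯G = {η·g_σ : σ ∈ ∂𝒪, η ∈ 𝒯_σ}`. -/
def reductors (O : Set (Term n)) (lab : Term n → ℕ)
    (g : Term n → MvPolynomial (Fin (n + 1)) K) : Set (MvPolynomial (Fin (n + 1)) K) :=
  {p | ∃ σ ∈ border O, ∃ η ∈ mulSet O lab σ, p = monomial η (1 : K) * g σ}

/-- The degree-`d` border reductors `𝒯G_d = 𝒯G ∩ P_d`. -/
def reductorsDeg (O : Set (Term n)) (lab : Term n → ℕ)
    (g : Term n → MvPolynomial (Fin (n + 1)) K) (d : ℕ) :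
    Set (MvPolynomial (Fin (n + 1)) K) :=
  reductors O lab g ∩ {p | p.IsHomogeneous d}

/-- One step of the border reduction relation `→_G`. -/
def Step (O : Set (Term n)) (lab : Term n → ℕ)
    (g : Term n → MvPolynomial (Fin (n + 1)) K)
    (f h : MvPolynomial (Fin (n + 1)) K) : Prop :=
  ∃ σ ∈ border O, ∃ η ∈ mulSet O lab σ, η + σ ∈ f.support ∧
    h = f - f.coeff (η + σ) • (monomial η (1 : K) * g σ)

/-- The border reduction relation `→⁺_G` (finitely many, possibly zero, steps). -/
def Reduces (O : Set (Term n)) (lab : Term n → ℕ)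
    (g : Term n → MvPolynomial (Fin (n + 1)) K) :
    MvPolynomial (Fin (n + 1)) K → MvPolynomial (Fin (n + 1)) K → Prop :=
  Relation.ReflTransGen (Step O lab g)

/-- The `K`-vector space spanned by a set of terms. -/
noncomputable def spanTerms (K : Type*) [Field K] (S : Set (Term n)) :
    Submodule K (MvPolynomial (Fin (n + 1)) K) :=
  Submodule.span K ((fun τ => monomial τ (1 : K)) '' S)

/-- The ideal `(G)` generated by a `∂𝒪`-prebasis. -/
noncomputable def idealG (O : Set (Term n)) (g : Term n → MvPolynomial (Fin (n + 1)) K) :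
    Ideal (MvPolynomial (Fin (n + 1)) K) :=
  Ideal.span (g '' border O)

/-- The degree-`d` part `I_d` of an ideal, as a `K`-vector subspace. -/
noncomputable def degPart (I : Ideal (MvPolynomial (Fin (n + 1)) K)) (d : ℕ) :
    Submodule K (MvPolynomial (Fin (n + 1)) K) :=
  Submodule.restrictScalars K I ⊓ homogeneousSubmodule (Fin (n + 1)) K d

/-- Homogeneous ideal. -/
def IsHomogeneousIdeal (I : Ideal (MvPolynomial (Fin (n + 1)) K)) : Prop :=
  ∀ f ∈ I, ∀ d : ℕ, homogeneousComponent d f ∈ I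

/-- `G` is a homogeneous `∂𝒪`-basis of `J`: it is a prebasis contained in `J` and for every
`d` one has `P_d = J_d ⊕ ⟨𝒪_d⟩`, i.e. the residue classes of `𝒪_d` are a basis of `P_d/J_d`. -/
def IsBorderBasisOf (O : Set (Term n)) (g : Term n → MvPolynomial (Fin (n + 1)) K)
    (J : Ideal (MvPolynomial (Fin (n + 1)) K)) : Prop :=
  IsPrebasis O g ∧ (∀ σ ∈ border O, g σ ∈ J) ∧
    ∀ d : ℕ, degPart J d ⊔ spanTerms K (Od O d) = homogeneousSubmodule (Fin (n + 1)) K d ∧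
      Disjoint (degPart J d) (spanTerms K (Od O d))

/-- An `m`-lower representation of `f` by `𝒯G`: `f = Σ c_j • η_j·g_{σ_j}` with distinct
pairs `(η_j, σ_j)`, `η_j ∈ 𝒯_{σ_j}` and `ind(η_j σ_j) ≤ m`. -/
def HasLRep (O : Set (Term n)) (lab : Term n → ℕ)
    (g : Term n → MvPolynomial (Fin (n + 1)) K)
    (f : MvPolynomial (Fin (n + 1)) K) (m : ℕ) : Prop :=
  ∃ (s : Finset (Term n × Term n)) (c : Term n × Term n → K),
    (∀ p ∈ s, p.2 ∈ border O ∧ p.1 ∈ mulSet O lab p.2 ∧ ind O (p.1 + p.2) ≤ m) ∧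
    f = ∑ p ∈ s, c p • (monomial p.1 (1 : K) * g p.2)

/-- An `m`-lower representation of `f` by `𝒯G_d`. -/
def HasLRepDeg (O : Set (Term n)) (lab : Term n → ℕ)
    (g : Term n → MvPolynomial (Fin (n + 1)) K)
    (f : MvPolynomial (Fin (n + 1)) K) (m d : ℕ) : Prop :=
  ∃ (s : Finset (Term n × Term n)) (c : Term n × Term n → K),
    (∀ p ∈ s, p.2 ∈ border O ∧ p.1 ∈ mulSet O lab p.2 ∧ ind O (p.1 + p.2) ≤ m ∧
      (monomial p.1 (1 : K) * g p.2).IsHomogeneous d) ∧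
    f = ∑ p ∈ s, c p • (monomial p.1 (1 : K) * g p.2)

/-- The subtype of terms of `𝒪` of degree `d`. -/
abbrev OdSub (O : Set (Term n)) (d : ℕ) : Type _ := {τ : Term n // τ ∈ Od O d}

lemma tdeg_component_lt {d : ℕ} (m : Term n) (h : tdeg m = d) (i : Fin (n + 1)) :
    m i < d + 1 := by
  have : m i ≤ tdeg m :=
    Finset.single_le_sum (f := fun j => m j) (fun j _ => Nat.zero_le _) (Finset.mem_univ i)
  omega

instance (O : Set (Term n)) (d : ℕ) : Finite (OdSub O d) := by
  have hinj : Function.Injective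
      (fun τ : OdSub O d => fun i : Fin (n + 1) =>
        (⟨τ.1 i, tdeg_component_lt τ.1 τ.2.2 i⟩ : Fin (d + 1))) := by
    intro a b hab
    apply Subtype.ext
    apply Finsupp.ext
    intro i
    simpa using congrArg Fin.val (congrFun hab i)
  exact Finite.of_injective _ hinj

noncomputable instance (O : Set (Term n)) (d : ℕ) : Fintype (OdSub O d) :=
  Fintype.ofFinite _

open scoped Classical in
/-- The `r`-th `d`-graded formal multiplication matrix of a prebasis `G`,
with rows indexed by `𝒪_{d+1}` and columns by `𝒪_d`. -/
noncomputable def multMatrix (O : Set (Term n))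
    (g : Term n → MvPolynomial (Fin (n + 1)) K) (r : Fin (n + 1)) (d : ℕ) :
    Matrix (OdSub O (d + 1)) (OdSub O d) K :=
  Matrix.of fun τ' τ =>
    if τ.1 + Finsupp.single r 1 ∈ O then
      (if τ.1 + Finsupp.single r 1 = τ'.1 then 1 else 0)
    else (monomial (τ.1 + Finsupp.single r 1) (1 : K)
            - g (τ.1 + Finsupp.single r 1)).coeff τ'.1

/-- The minimum degree of a border term. -/
noncomputable def minDegBorder (O : Set (Term n)) : ℕ := sInf (tdeg '' border O)

/-- The `d`-th Macaulay transformation `a^{⟨d⟩}`, computed greedily. -/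
noncomputable def macaulay : ℕ → ℕ → ℕ
  | 0, _ => 0
  | d + 1, a =>
    if a = 0 then 0
    else
      Nat.choose (sSup {k | Nat.choose k (d + 1) ≤ a} + 1) (d + 2) +
        macaulay d (a - Nat.choose (sSup {k | Nat.choose k (d + 1) ≤ a}) (d + 1))

/-- An ideal is generated in degrees `≤ m` if it is generated by its homogeneous
elements of degree `≤ m`. -/
def GeneratedInDegLE (I : Ideal (MvPolynomial (Fin (n + 1)) K)) (m : ℕ) : Prop :=
  I = Ideal.span {f | f ∈ I ∧ ∃ d ≤ m, f.IsHomogeneous d}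

section AuxLemmas

variable {O : Set (Term n)} {lab : Term n → ℕ}

lemma tdeg_degree (m : Term n) : Finsupp.degree m = tdeg m :=
  Finset.sum_subset (Finset.subset_univ _)
    (fun i _ hi => Finsupp.notMem_support_iff.mp hi)

lemma weight_one_eq_tdeg (d : Term n) : (Finsupp.weight 1) d = tdeg d :=
  (DFunLike.congr_fun Finsupp.degree_eq_weight_one d).symm.trans (tdeg_degree d)

lemma tdeg_add (a b : Term n) : tdeg (a + b) = tdeg a + tdeg b := by
  simp [tdeg, Finsupp.add_apply, Finset.sum_add_distrib]

lemma tdeg_single (r : Fin (n + 1)) : tdeg (Finsupp.single r 1 : Term n) = 1 := by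
  simp [tdeg, Finsupp.single_apply]

lemma tdeg_eq_zero {m : Term n} (h : tdeg m = 0) : m = 0 := by
  ext i
  exact (Finset.sum_eq_zero_iff.mp h) i (Finset.mem_univ i)

lemma tdeg_mono {a b : Term n} (h : a ≤ b) : tdeg a ≤ tdeg b :=
  Finset.sum_le_sum (fun i _ => (Finsupp.le_def.mp h) i)

lemma zero_mem_oi (hO : IsOrderIdeal O) : (0 : Term n) ∈ O := by
  obtain ⟨τ, hτ⟩ := hO.1
  exact hO.2 τ hτ 0 zero_le

lemma add_not_mem (hO : IsOrderIdeal O) {σ : Term n} (hσ : σ ∉ O) (η : Term n) :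
    η + σ ∉ O := fun h => hσ (hO.2 _ h σ le_add_self)

lemma mem_borderClosure_iff (k : ℕ) (t : Term n) :
    t ∈ borderClosure O k ↔ ∃ η τ : Term n, τ ∈ O ∧ tdeg η ≤ k ∧ t = η + τ := by
  induction k generalizing t with
  | zero =>
    constructor
    · intro h
      exact ⟨0, t, h, by simp [tdeg], (zero_add t).symm⟩
    · rintro ⟨η, τ, hτ, hη, rfl⟩
      rw [tdeg_eq_zero (Nat.le_zero.mp hη), zero_add]
      exact hτ
  | succ k ih =>
    constructor
    · rintro (h | ⟨-, r, τ', hτ', rfl⟩)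
      · obtain ⟨η, τ, h1, h2, h3⟩ := (ih t).mp h
        exact ⟨η, τ, h1, h2.trans (Nat.le_succ k), h3⟩
      · obtain ⟨η, τ, h1, h2, rfl⟩ := (ih τ').mp hτ'
        refine ⟨η + Finsupp.single r 1, τ, h1, by rw [tdeg_add, tdeg_single]; omega, ?_⟩
        exact add_right_comm η τ (Finsupp.single r 1)
    · rintro ⟨η, τ, hτ, hη, rfl⟩
      by_cases h0 : tdeg η ≤ k
      · exact Or.inl ((ih _).mpr ⟨η, τ, hτ, h0, rfl⟩)
      · have hne : η ≠ 0 := by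
          intro e
          rw [e] at h0
          simp [tdeg] at h0
        obtain ⟨r, hr⟩ := Finsupp.support_nonempty_iff.mpr hne
        have hle : Finsupp.single r 1 ≤ η := by
          rw [Finsupp.single_le_iff]
          exact Nat.one_le_iff_ne_zero.mpr (Finsupp.mem_support_iff.mp hr)
        have hrec : η = (η - Finsupp.single r 1) + Finsupp.single r 1 :=
          (tsub_add_cancel_of_le hle).symm
        have hdeg' : tdeg (η - Finsupp.single r 1) ≤ k := by
          have h2 := tdeg_add (η - Finsupp.single r 1) (Finsupp.single r 1)
          rw [← hrec, tdeg_single] at h2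
          omega
        have hu : (η - Finsupp.single r 1) + τ ∈ borderClosure O k :=
          (ih _).mpr ⟨_, τ, hτ, hdeg', rfl⟩
        have heq : η + τ = ((η - Finsupp.single r 1) + τ) + Finsupp.single r 1 := by
          conv_lhs => rw [hrec]
          exact add_right_comm _ _ τ
        by_cases hmem : η + τ ∈ borderClosure O k
        · exact Or.inl hmem
        · exact Or.inr ⟨hmem, r, _, hu, heq⟩

lemma borderClosure_mono {j k : ℕ} (h : j ≤ k) :
    borderClosure O j ⊆ borderClosure O k := by
  induction h with
  | refl => exact subset_rfl
  | step _ ih => exact ih.trans Set.subset_union_left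

lemma mem_borderClosure_tdeg (hO : IsOrderIdeal O) (t : Term n) :
    t ∈ borderClosure O (tdeg t) :=
  (mem_borderClosure_iff _ _).mpr ⟨t, 0, zero_mem_oi hO, le_rfl, (add_zero t).symm⟩

lemma ind_mem (hO : IsOrderIdeal O) (t : Term n) : t ∈ borderClosure O (ind O t) := by
  have h : sInf {k | t ∈ borderClosure O k} ∈ {k | t ∈ borderClosure O k} :=
    Nat.sInf_mem ⟨tdeg t, mem_borderClosure_tdeg hO t⟩
  exact h

lemma ind_le {t : Term n} {k : ℕ} (h : t ∈ borderClosure O k) : ind O t ≤ k :=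
  Nat.sInf_le h

lemma ind_le_tdeg_of_mem {τ : Term n} (hτ : τ ∈ O) (η : Term n) :
    ind O (η + τ) ≤ tdeg η :=
  ind_le ((mem_borderClosure_iff _ _).mpr ⟨η, τ, hτ, le_rfl, rfl⟩)

lemma exists_border_factor_aux (hO : IsOrderIdeal O) :
    ∀ (k : ℕ) (η τ : Term n), tdeg η ≤ k → τ ∈ O → η + τ ∉ O →
      ∃ σ ∈ border O, ∃ η', η + τ = η' + σ ∧ tdeg η' < tdeg η := by
  intro k
  induction k with
  | zero =>
    intro η τ hk hτ hout
    rw [tdeg_eq_zero (Nat.le_zero.mp hk), zero_add] at hout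
    exact absurd hτ hout
  | succ k ih =>
    intro η τ hk hτ hout
    have hne : η ≠ 0 := by
      rintro rfl
      rw [zero_add] at hout
      exact hout hτ
    obtain ⟨r, hr⟩ := Finsupp.support_nonempty_iff.mpr hne
    have hle : Finsupp.single r 1 ≤ η := by
      rw [Finsupp.single_le_iff]
      exact Nat.one_le_iff_ne_zero.mpr (Finsupp.mem_support_iff.mp hr)
    have hrec : η = (η - Finsupp.single r 1) + Finsupp.single r 1 :=
      (tsub_add_cancel_of_le hle).symm
    have htd : tdeg η = tdeg (η - Finsupp.single r 1) + 1 := by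
      conv_lhs => rw [hrec]
      rw [tdeg_add, tdeg_single]
    have hsplit : η + τ = (η - Finsupp.single r 1) + (τ + Finsupp.single r 1) := by
      conv_lhs => rw [hrec]
      rw [add_assoc, add_comm (Finsupp.single r 1) τ]
    by_cases hmem : τ + Finsupp.single r 1 ∈ O
    · have hout' : (η - Finsupp.single r 1) + (τ + Finsupp.single r 1) ∉ O := by
        rw [← hsplit]
        exact hout
      obtain ⟨σ, hσ, η'', heq, hlt⟩ := ih _ _ (by omega) hmem hout'
      exact ⟨σ, hσ, η'', hsplit.trans heq, by omega⟩
    · exact ⟨τ + Finsupp.single r 1, ⟨hmem, r, τ, hτ, rfl⟩, η - Finsupp.single r 1,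
        hsplit, by omega⟩

lemma exists_border_factor (hO : IsOrderIdeal O) {η τ : Term n} (hτ : τ ∈ O)
    (hout : η + τ ∉ O) :
    ∃ σ ∈ border O, ∃ η', η + τ = η' + σ ∧ tdeg η' < tdeg η :=
  exists_border_factor_aux hO (tdeg η) η τ le_rfl hτ hout

lemma lab_lt_of_tdeg_lt (hlab : DegOrderedLabeling O lab) {σ σ' : Term n}
    (hσ : σ ∈ border O) (hσ' : σ' ∈ border O) (h : tdeg σ < tdeg σ') :
    lab σ < lab σ' := by
  rcases lt_trichotomy (lab σ) (lab σ') with hl | hl | hl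
  · exact hl
  · exact absurd (hlab.1 hσ hσ' hl) (by rintro rfl; omega)
  · exact absurd (hlab.2 σ' hσ' σ hσ hl) (by omega)

lemma ind_cone (hO : IsOrderIdeal O) (hlab : DegOrderedLabeling O lab)
    {σ : Term n} (hσ : σ ∈ border O) {η : Term n} (hη : η ∈ mulSet O lab σ) :
    ind O (η + σ) = tdeg η + 1 := by
  obtain ⟨hσO, r, τ₀, hτ₀, hσeq⟩ := id hσ
  have hle : ind O (η + σ) ≤ tdeg η + 1 := by
    refine ind_le ((mem_borderClosure_iff _ _).mpr
      ⟨η + Finsupp.single r 1, τ₀, hτ₀, ?_, ?_⟩)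
    · rw [tdeg_add, tdeg_single]
    · rw [hσeq, add_assoc, add_comm τ₀ (Finsupp.single r 1), ← add_assoc]
  have hge : ¬ ind O (η + σ) ≤ tdeg η := by
    intro hcon
    have hmem : η + σ ∈ borderClosure O (tdeg η) :=
      borderClosure_mono hcon (ind_mem hO _)
    obtain ⟨η₁, τ₁, hτ₁, hd₁, heq₁⟩ := (mem_borderClosure_iff _ _).mp hmem
    have hout : η₁ + τ₁ ∉ O := by
      rw [← heq₁]
      exact add_not_mem hO hσO η
    obtain ⟨σ₂, hσ₂, η₂, heq₂, hlt₂⟩ := exists_border_factor hO hτ₁ hout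
    have heq₃ : η + σ = η₂ + σ₂ := heq₁.trans heq₂
    have e1 : tdeg η + tdeg σ = tdeg η₂ + tdeg σ₂ := by
      have := congrArg tdeg heq₃
      rwa [tdeg_add, tdeg_add] at this
    have hlt : tdeg σ < tdeg σ₂ := by omega
    exact hη σ₂ hσ₂ (lab_lt_of_tdeg_lt hlab hσ hσ₂ hlt)
      (by rw [heq₃]; exact le_add_self)
  omega

lemma exists_mulSet_factor (hO : IsOrderIdeal O) (hlab : DegOrderedLabeling O lab)
    {t : Term n} (ht : t ∉ O) :
    ∃ σ ∈ border O, ∃ η ∈ mulSet O lab σ, t = η + σ := by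
  have h0 : t + 0 ∉ O := by rwa [add_zero]
  obtain ⟨σ₀, hσ₀, η₀, heq₀, -⟩ := exists_border_factor hO (zero_mem_oi hO) h0
  rw [add_zero] at heq₀
  have hBfin : {σ' | σ' ∈ border O ∧ σ' ≤ t}.Finite := by
    apply Set.Finite.subset (Finsupp.finite_of_degree_le (Finsupp.degree t))
    intro σ' hσ'
    simp only [Set.mem_setOf_eq, tdeg_degree]
    exact tdeg_mono hσ'.2
  have hBne : hBfin.toFinset.Nonempty := by
    rw [Set.Finite.toFinset_nonempty]
    exact ⟨σ₀, hσ₀, by rw [heq₀]; exact le_add_self⟩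
  obtain ⟨σ, hσmem, hσmax⟩ := Finset.exists_max_image hBfin.toFinset lab hBne
  rw [Set.Finite.mem_toFinset] at hσmem
  obtain ⟨hσb, hσle⟩ := hσmem
  refine ⟨σ, hσb, t - σ, ?_, (tsub_add_cancel_of_le hσle).symm⟩
  intro σ' hσ' hlabgt hdvd
  rw [tsub_add_cancel_of_le hσle] at hdvd
  have hmem : σ' ∈ hBfin.toFinset := by
    rw [Set.Finite.mem_toFinset]
    exact ⟨hσ', hdvd⟩
  exact absurd (hσmax σ' hmem) (by omega)

lemma cone_factor_unique (hlab : DegOrderedLabeling O lab) {σ σ' η η' : Term n}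
    (hσ : σ ∈ border O) (hσ' : σ' ∈ border O) (hη : η ∈ mulSet O lab σ)
    (hη' : η' ∈ mulSet O lab σ') (heq : η + σ = η' + σ') : σ = σ' ∧ η = η' := by
  have hss : σ = σ' := by
    by_contra hne
    have hll : lab σ ≠ lab σ' := fun e => hne (hlab.1 hσ hσ' e)
    rcases hll.lt_or_gt with h | h
    · exact hη σ' hσ' h (by rw [heq]; exact le_add_self)
    · exact hη' σ hσ h (by rw [← heq]; exact le_add_self)
  subst hss
  exact ⟨rfl, add_right_cancel heq⟩

end AuxLemmas

section PolyLemmas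

variable {K : Type*} [Field K]
variable {O : Set (Term n)} {lab : Term n → ℕ}
variable {g : Term n → MvPolynomial (Fin (n + 1)) K}

lemma isHomogeneous_of_support {φ : MvPolynomial (Fin (n + 1)) K} {m : ℕ}
    (h : ∀ d ∈ φ.support, tdeg d = m) : φ.IsHomogeneous m := by
  intro d hd
  rw [weight_one_eq_tdeg]
  exact h d (mem_support_iff.mpr hd)

lemma tdeg_eq_of_isHomogeneous {φ : MvPolynomial (Fin (n + 1)) K} {m : ℕ}
    (h : φ.IsHomogeneous m) {d : Term n} (hd : d ∈ φ.support) : tdeg d = m := by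
  rw [← weight_one_eq_tdeg]
  exact h (mem_support_iff.mp hd)

lemma g_isHomog (hg : IsPrebasis O g) {σ : Term n} (hσ : σ ∈ border O) :
    (g σ).IsHomogeneous (tdeg σ) := by
  have h1 : (monomial σ (1 : K)).IsHomogeneous (tdeg σ) :=
    isHomogeneous_monomial 1 (tdeg_degree σ)
  have h2 : (monomial σ (1 : K) - g σ).IsHomogeneous (tdeg σ) :=
    isHomogeneous_of_support (fun d hd => (hg σ hσ d hd).2)
  have h3 := h1.sub h2
  rwa [show monomial σ (1 : K) - (monomial σ 1 - g σ) = g σ by ring] at h3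

lemma reductor_eq (σ η : Term n) :
    monomial η (1 : K) * g σ
      = monomial (η + σ) 1 - monomial η 1 * (monomial σ 1 - g σ) := by
  rw [mul_sub, monomial_mul, one_mul]
  ring

lemma reductor_isHomog (hg : IsPrebasis O g) {σ : Term n} (hσ : σ ∈ border O)
    (η : Term n) :
    (monomial η (1 : K) * g σ).IsHomogeneous (tdeg η + tdeg σ) :=
  (isHomogeneous_monomial 1 (tdeg_degree η)).mul (g_isHomog hg hσ)

lemma coeff_lead (hg : IsPrebasis O g) {σ : Term n} (hσ : σ ∈ border O)
    (η : Term n) : coeff (η + σ) (monomial η (1 : K) * g σ) = 1 := by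
  rw [reductor_eq, coeff_sub, coeff_monomial, if_pos rfl, coeff_monomial_mul, one_mul]
  have hc : coeff σ (monomial σ (1 : K) - g σ) = 0 := by
    by_contra hc
    exact hσ.1 (hg σ hσ σ (mem_support_iff.mpr hc)).1
  rw [hc, sub_zero]

lemma reductor_support (hg : IsPrebasis O g) {σ : Term n} (hσ : σ ∈ border O)
    (η : Term n) :
    ∀ t ∈ (monomial η (1 : K) * g σ).support,
      t = η + σ ∨ ∃ τ ∈ O, tdeg τ = tdeg σ ∧ t = η + τ := by
  intro t ht
  by_cases he : t = η + σ
  · exact Or.inl he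
  · right
    rw [mem_support_iff, reductor_eq, coeff_sub, coeff_monomial, if_neg (fun e => he e.symm),
      zero_sub, neg_ne_zero, coeff_monomial_mul'] at ht
    by_cases hle : η ≤ t
    · rw [if_pos hle, one_mul] at ht
      obtain ⟨h1, h2⟩ := hg σ hσ _ (mem_support_iff.mpr ht)
      exact ⟨t - η, h1, h2, ((tsub_add_cancel_of_le hle).symm).trans (add_comm _ _)⟩
    · rw [if_neg hle] at ht
      exact absurd rfl ht

lemma reductor_lead_mem_support (hg : IsPrebasis O g) {σ : Term n}
    (hσ : σ ∈ border O) (η : Term n) :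
    η + σ ∈ (monomial η (1 : K) * g σ).support :=
  mem_support_iff.mpr (by rw [coeff_lead hg hσ η]; exact one_ne_zero)

lemma reductor_indP (hO : IsOrderIdeal O) (hlab : DegOrderedLabeling O lab)
    (hg : IsPrebasis O g) {σ : Term n} (hσ : σ ∈ border O) {η : Term n}
    (hη : η ∈ mulSet O lab σ) :
    indP O (monomial η (1 : K) * g σ) = tdeg η + 1 := by
  apply le_antisymm
  · apply Finset.sup_le
    intro t ht
    rcases reductor_support hg hσ η t ht with rfl | ⟨τ, hτO, -, rfl⟩
    · rw [ind_cone hO hlab hσ hη]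
    · exact (ind_le_tdeg_of_mem hτO η).trans (Nat.le_succ _)
  · rw [← ind_cone hO hlab hσ hη]
    exact Finset.le_sup (reductor_lead_mem_support hg hσ η)

lemma support_subset_of_mem_spanTerms {S : Set (Term n)}
    {f : MvPolynomial (Fin (n + 1)) K} (hf : f ∈ spanTerms K S) :
    ↑f.support ⊆ S := by
  classical
  induction hf using Submodule.span_induction with
  | mem x hx =>
    obtain ⟨τ, hτS, rfl⟩ := hx
    intro y hy
    rw [Finset.mem_coe, support_monomial, if_neg one_ne_zero, Finset.mem_singleton] at hy
    subst hy
    exact hτS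
  | zero => simp
  | add x y _ _ ihx ihy =>
    intro z hz
    rcases Finset.mem_union.mp (support_add hz) with h | h
    · exact ihx h
    · exact ihy h
  | smul c x _ ih =>
    intro z hz
    exact ih (support_smul hz)

lemma spanTerms_le_homog (d : ℕ) :
    spanTerms K (Od O d) ≤ homogeneousSubmodule (Fin (n + 1)) K d := by
  rw [spanTerms, Submodule.span_le]
  rintro p ⟨τ, ⟨hτO, hτd⟩, rfl⟩
  exact isHomogeneous_monomial 1 (by rw [tdeg_degree, hτd])

lemma span_reductorsDeg_le_homog (d : ℕ) :
    Submodule.span K (reductorsDeg O lab g d)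
      ≤ homogeneousSubmodule (Fin (n + 1)) K d := by
  rw [Submodule.span_le]
  rintro p ⟨-, hp⟩
  exact hp

lemma mul_monomial_mem {V : Submodule K (MvPolynomial (Fin (n + 1)) K)} {η : Term n}
    {q : MvPolynomial (Fin (n + 1)) K}
    (hq : ∀ τ ∈ q.support, monomial (η + τ) (1 : K) ∈ V) :
    monomial η (1 : K) * q ∈ V := by
  have heq : monomial η (1 : K) * q
      = ∑ τ ∈ q.support, (coeff τ q) • monomial (η + τ) (1 : K) := by
    conv_lhs => rw [as_sum q]
    rw [Finset.mul_sum]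
    refine Finset.sum_congr rfl fun τ _ => ?_
    rw [monomial_mul, one_mul, smul_monomial, smul_eq_mul, mul_one]
  rw [heq]
  exact Submodule.sum_mem _ fun τ hτ => Submodule.smul_mem _ _ (hq τ hτ)

lemma monomial_mem_sup (hO : IsOrderIdeal O) (hlab : DegOrderedLabeling O lab)
    (hg : IsPrebasis O g) (d : ℕ) :
    ∀ (m : ℕ) (t : Term n), tdeg t = d → ind O t ≤ m →
      monomial t (1 : K) ∈
        Submodule.span K (reductorsDeg O lab g d) ⊔ spanTerms K (Od O d) := by
  intro m
  induction m using Nat.strong_induction_on with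
  | _ m ih =>
    intro t htd hind
    by_cases htO : t ∈ O
    · exact Submodule.mem_sup_right (Submodule.subset_span ⟨t, ⟨htO, htd⟩, rfl⟩)
    · obtain ⟨σ, hσ, η, hη, rfl⟩ := exists_mulSet_factor hO hlab htO
      have hic := ind_cone hO hlab hσ hη
      have hηm : tdeg η < m := by omega
      have hdeg : tdeg η + tdeg σ = d := by rw [← htd, tdeg_add]
      have hpmem : monomial η (1 : K) * g σ ∈ reductorsDeg O lab g d :=
        ⟨⟨σ, hσ, η, hη, rfl⟩, by rw [← hdeg]; exact reductor_isHomog hg hσ η⟩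
      have hrest : monomial η (1 : K) * (monomial σ 1 - g σ) ∈
          Submodule.span K (reductorsDeg O lab g d) ⊔ spanTerms K (Od O d) := by
        apply mul_monomial_mem
        intro τ hτ
        obtain ⟨hτO, hτd⟩ := hg σ hσ τ hτ
        exact ih (tdeg η) hηm (η + τ) (by rw [tdeg_add, hτd]; omega)
          (ind_le_tdeg_of_mem hτO η)
      have hkey : monomial (η + σ) (1 : K)
          = monomial η 1 * g σ + monomial η 1 * (monomial σ 1 - g σ) := by
        rw [← mul_add, show g σ + (monomial σ (1 : K) - g σ) = monomial σ 1 by ring,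
          monomial_mul, one_mul]
      rw [hkey]
      exact Submodule.add_mem _
        (Submodule.mem_sup_left (Submodule.subset_span hpmem)) hrest

lemma sup_span_eq (hO : IsOrderIdeal O) (hlab : DegOrderedLabeling O lab)
    (hg : IsPrebasis O g) (d : ℕ) :
    Submodule.span K (reductorsDeg O lab g d) ⊔ spanTerms K (Od O d)
      = homogeneousSubmodule (Fin (n + 1)) K d := by
  apply le_antisymm
  · exact sup_le (span_reductorsDeg_le_homog d) (spanTerms_le_homog d)
  · intro f hf
    have heq : f = ∑ v ∈ f.support, (coeff v f) • monomial v (1 : K) := by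
      conv_lhs => rw [as_sum f]
      exact Finset.sum_congr rfl fun v _ => by
        rw [smul_monomial, smul_eq_mul, mul_one]
    rw [heq]
    apply Submodule.sum_mem
    intro v hv
    apply Submodule.smul_mem
    have hvd : tdeg v = d :=
      tdeg_eq_of_isHomogeneous ((mem_homogeneousSubmodule _ _).mp hf) hv
    exact monomial_mem_sup hO hlab hg d (ind O v) v hvd le_rfl

lemma disjoint_span_reductorsDeg (hO : IsOrderIdeal O)
    (hlab : DegOrderedLabeling O lab) (hg : IsPrebasis O g) (d : ℕ) :
    Disjoint (Submodule.span K (reductorsDeg O lab g d)) (spanTerms K (Od O d)) := by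
  rw [Submodule.disjoint_def]
  intro f hfV hfS
  obtain ⟨c, hcs, hcsum⟩ := Submodule.mem_span_set.mp hfV
  rcases Finset.eq_empty_or_nonempty c.support with he | hne
  · rw [← hcsum, Finsupp.sum, he, Finset.sum_empty]
  · exfalso
    have hdata : ∀ p ∈ c.support, ∃ σ η, σ ∈ border O ∧ η ∈ mulSet O lab σ ∧
        p = monomial η (1 : K) * g σ := by
      intro p hp
      obtain ⟨⟨σ, hσ, η, hη, he'⟩, -⟩ := hcs hp
      exact ⟨σ, η, hσ, hη, he'⟩
    choose σf ηf hσf hηf hpf using hdata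
    obtain ⟨p₀, hp₀, hmax⟩ := Finset.exists_max_image c.support (indP O) hne
    have hLcoeff : coeff (ηf p₀ hp₀ + σf p₀ hp₀) f = c p₀ := by
      rw [← hcsum, Finsupp.sum, coeff_sum]
      rw [Finset.sum_eq_single_of_mem p₀ hp₀]
      · have hcl := coeff_lead hg (hσf p₀ hp₀) (ηf p₀ hp₀)
        rw [← hpf p₀ hp₀] at hcl
        rw [coeff_smul, hcl, smul_eq_mul, mul_one]
      · intro p hp hpe
        rw [coeff_smul, smul_eq_mul]
        have hz : coeff (ηf p₀ hp₀ + σf p₀ hp₀) p = 0 := by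
          by_contra hcz
          have hmem : ηf p₀ hp₀ + σf p₀ hp₀ ∈ p.support := mem_support_iff.mpr hcz
          rw [hpf p hp] at hmem
          rcases reductor_support hg (hσf p hp) (ηf p hp) _ hmem with he2 | ⟨τ, hτO, -, he2⟩
          · obtain ⟨hs, hh⟩ := cone_factor_unique hlab (hσf p hp) (hσf p₀ hp₀)
              (hηf p hp) (hηf p₀ hp₀) he2.symm
            exact hpe (by rw [hpf p hp, hpf p₀ hp₀, hs, hh])
          · have h1 : ind O (ηf p₀ hp₀ + σf p₀ hp₀) ≤ tdeg (ηf p hp) := by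
              rw [he2]
              exact ind_le_tdeg_of_mem hτO _
            have h2 := ind_cone hO hlab (hσf p₀ hp₀) (hηf p₀ hp₀)
            have h3 := hmax p hp
            have h4 := reductor_indP hO hlab hg (hσf p hp) (hηf p hp)
            rw [← hpf p hp] at h4
            have h5 := reductor_indP hO hlab hg (hσf p₀ hp₀) (hηf p₀ hp₀)
            rw [← hpf p₀ hp₀] at h5
            omega
        rw [hz, mul_zero]
    have hc0 : c p₀ ≠ 0 := Finsupp.mem_support_iff.mp hp₀
    have hmemf : ηf p₀ hp₀ + σf p₀ hp₀ ∈ f.support :=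
      mem_support_iff.mpr (by rw [hLcoeff]; exact hc0)
    have hinO : ηf p₀ hp₀ + σf p₀ hp₀ ∈ O :=
      (support_subset_of_mem_spanTerms hfS hmemf).1
    exact add_not_mem hO (hσf p₀ hp₀).1 _ hinO

lemma reductor_mem_idealG {p : MvPolynomial (Fin (n + 1)) K}
    (hp : p ∈ reductors O lab g) : p ∈ idealG O g := by
  obtain ⟨σ, hσ, η, hη, rfl⟩ := hp
  exact Ideal.mul_mem_left _ _ (Ideal.subset_span ⟨σ, hσ, rfl⟩)

lemma span_reductorsDeg_le_degPart (d : ℕ) :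
    Submodule.span K (reductorsDeg O lab g d) ≤ degPart (idealG O g) d := by
  rw [Submodule.span_le]
  rintro p ⟨hp1, hp2⟩
  exact Submodule.mem_inf.mpr ⟨reductor_mem_idealG hp1, hp2⟩

lemma hc_mem_idealG (hg : IsPrebasis O g) {f : MvPolynomial (Fin (n + 1)) K}
    (hf : f ∈ idealG O g) (d : ℕ) :
    homogeneousComponent d f ∈ idealG O g := by
  obtain ⟨c, hcs, hcsum⟩ := Submodule.mem_span_set.mp hf
  rw [← hcsum, Finsupp.sum, map_sum]
  apply Ideal.sum_mem
  intro x hx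
  obtain ⟨σ, hσ, rfl⟩ := hcs hx
  rw [smul_eq_mul]
  have hdec : c (g σ) * g σ = ∑ i ∈ Finset.range ((c (g σ)).totalDegree + 1),
      homogeneousComponent i (c (g σ)) * g σ := by
    rw [← Finset.sum_mul, sum_homogeneousComponent]
  rw [hdec, map_sum]
  apply Ideal.sum_mem
  intro i _
  have hhom : homogeneousComponent i (c (g σ)) * g σ
      ∈ homogeneousSubmodule (Fin (n + 1)) K (i + tdeg σ) :=
    (mem_homogeneousSubmodule _ _).mpr
      ((homogeneousComponent_isHomogeneous i (c (g σ))).mul (g_isHomog hg hσ))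
  rw [homogeneousComponent_of_mem hhom]
  split
  · exact Ideal.mul_mem_left _ _ (Ideal.subset_span ⟨σ, hσ, rfl⟩)
  · exact Ideal.zero_mem _

end PolyLemmas

/-- **Characterization by border reductors.** For an infinite order ideal with a
degree-ordered labeling: `G` is a homogeneous `∂𝒪`-basis ⟺ `⟨𝒯G_d⟩ = (G)_d` for every `d`
⟺ `⟨𝒯G⟩ = (G)`. -/
theorem char_by_reductors (O : Set (Term n)) (hO : IsOrderIdeal O) (hinf : O.Infinite)
    (lab : Term n → ℕ) (hlab : DegOrderedLabeling O lab)
    (g : Term n → MvPolynomial (Fin (n + 1)) K) (hg : IsPrebasis O g) :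
    (IsBorderBasisOf O g (idealG O g) ↔
      ∀ d : ℕ, Submodule.span K (reductorsDeg O lab g d) = degPart (idealG O g) d) ∧
    ((∀ d : ℕ, Submodule.span K (reductorsDeg O lab g d) = degPart (idealG O g) d) ↔
      Submodule.span K (reductors O lab g) =
        Submodule.restrictScalars K (idealG O g)) := by
  constructor
  · constructor
    · rintro ⟨-, -, hsplit⟩ d
      obtain ⟨hsup, hdisj⟩ := hsplit d
      apply le_antisymm (span_reductorsDeg_le_degPart d)
      have h1 : degPart (idealG O g) d ≤
          Submodule.span K (reductorsDeg O lab g d) ⊔ spanTerms K (Od O d) := by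
        rw [sup_span_eq hO hlab hg d]
        exact inf_le_right
      have h2 := sup_inf_assoc_of_le (spanTerms K (Od O d))
        (span_reductorsDeg_le_degPart (O := O) (lab := lab) (g := g) d)
      have e1 : (Submodule.span K (reductorsDeg O lab g d) ⊔ spanTerms K (Od O d)) ⊓
          degPart (idealG O g) d = degPart (idealG O g) d := inf_eq_right.mpr h1
      rw [hdisj.symm.eq_bot, sup_bot_eq] at h2
      exact (e1.symm.trans h2).le
    · intro hVI
      refine ⟨hg, fun σ hσ => Ideal.subset_span ⟨σ, hσ, rfl⟩, fun d => ?_⟩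
      rw [← hVI d]
      exact ⟨sup_span_eq hO hlab hg d, disjoint_span_reductorsDeg hO hlab hg d⟩
  · constructor
    · intro hVI
      apply le_antisymm
      · rw [Submodule.span_le]
        intro p hp
        exact reductor_mem_idealG hp
      · intro f hf
        have hfsum : f = ∑ i ∈ Finset.range (f.totalDegree + 1), homogeneousComponent i f :=
          (sum_homogeneousComponent f).symm
        rw [hfsum]
        apply Submodule.sum_mem
        intro i _
        have h1 : homogeneousComponent i f ∈ degPart (idealG O g) i :=
          Submodule.mem_inf.mpr ⟨hc_mem_idealG hg hf i, homogeneousComponent_mem i f⟩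
        rw [← hVI i] at h1
        exact Submodule.span_mono Set.inter_subset_left h1
    · intro hTG d
      apply le_antisymm (span_reductorsDeg_le_degPart d)
      intro f hf
      obtain ⟨hfI, hfhom⟩ := Submodule.mem_inf.mp hf
      have hfmem : f ∈ Submodule.span K (reductors O lab g) := by
        rw [hTG]
        exact hfI
      have hfc : homogeneousComponent d f = f := by
        rw [homogeneousComponent_of_mem hfhom, if_pos rfl]
      rw [← hfc]
      have hmap : homogeneousComponent d f ∈
          Submodule.map (homogeneousComponent (R := K) (σ := Fin (n + 1)) d)
            (Submodule.span K (reductors O lab g)) := ⟨f, hfmem, rfl⟩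
      rw [Submodule.map_span] at hmap
      refine Submodule.span_le.mpr ?_ hmap
      rintro q ⟨p, hp, rfl⟩
      obtain ⟨σ, hσ, η, hη, rfl⟩ := hp
      have hhom : (monomial η (1 : K) * g σ)
          ∈ homogeneousSubmodule (Fin (n + 1)) K (tdeg η + tdeg σ) :=
        (mem_homogeneousSubmodule _ _).mpr (reductor_isHomog hg hσ η)
      rw [homogeneousComponent_of_mem hhom]
      split
      · next heq =>
          exact Submodule.subset_span ⟨⟨σ, hσ, η, hη, rfl⟩, by
            rw [heq]; exact reductor_isHomog hg hσ η⟩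
      · exact Submodule.zero_mem _

end Border
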